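/- The comb function f_C : [0,∞) → ℝ defined by f_C(x) = Σ_{n=1}^∞ e^{n/2} · χ_{[n − e^{−n}, n + e^{−n}]}(x) is essentially rapidly decaying (for every m ∈ ℕ, x ↦ x^m f_C(x) is integrable) but is unbounded; moreover f_C² is not essentially rapidly decaying. -/

import Mathlib

open MeasureTheory

/-- The comb function `f_C(x) = Σ_{n=1}^∞ e^{n/2} χ_{[n - e^{-n}, n + e^{-n}]}(x)`. -/
noncomputable def combF (x : ℝ) : ℝ :=
  ∑' N : ℕ, Real.exp ((N + 1 : ℝ) / 2) *
    Set.indicator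
      (Set.Icc ((N + 1 : ℝ) - Real.exp (-(N + 1 : ℝ))) ((N + 1 : ℝ) + Real.exp (-(N + 1 : ℝ))))
      (fun _ => (1 : ℝ)) x

/-- The `N`-th tooth interval. -/
noncomputable def combI (N : ℕ) : Set ℝ :=
  Set.Icc ((N + 1 : ℝ) - Real.exp (-(N + 1 : ℝ))) ((N + 1 : ℝ) + Real.exp (-(N + 1 : ℝ)))

lemma comb_exp_lt_half (N : ℕ) : Real.exp (-(N + 1 : ℝ)) < 1 / 2 := by
  have h1 : Real.exp (-(N + 1 : ℝ)) ≤ Real.exp (-1) := by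
    apply Real.exp_le_exp.2
    have : (0 : ℝ) ≤ N := Nat.cast_nonneg N
    linarith
  have h2 := Real.exp_one_gt_d9
  have h3 : Real.exp (-1) = (Real.exp 1)⁻¹ := Real.exp_neg 1
  have h4 : (Real.exp 1)⁻¹ < 1 / 2 := by
    rw [inv_lt_iff_one_lt_mul₀ (Real.exp_pos 1)]
    nlinarith
  linarith

lemma combI_uniq {N M : ℕ} {x : ℝ} (hN : x ∈ combI N) (hM : x ∈ combI M) : N = M := by
  by_contra hne
  have key : ∀ A B : ℕ, A < B → x ∈ combI A → x ∈ combI B → False := by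
    intro A B hAB hA hB
    have h1 := hA.2
    have h2 := hB.1
    have hA' := comb_exp_lt_half A
    have hB' := comb_exp_lt_half B
    have hc : (A : ℝ) + 1 ≤ (B : ℝ) := by exact_mod_cast Nat.succ_le_of_lt hAB
    linarith
  rcases lt_or_gt_of_ne hne with h | h
  · exact key N M h hN hM
  · exact key M N h hM hN

lemma combF_def (x : ℝ) : combF x =
    ∑' N : ℕ, Real.exp ((N + 1 : ℝ) / 2) * Set.indicator (combI N) (fun _ => (1 : ℝ)) x := rfl

lemma combF_eq_of_mem {N : ℕ} {x : ℝ} (hx : x ∈ combI N) :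
    combF x = Real.exp ((N + 1 : ℝ) / 2) := by
  rw [combF_def, tsum_eq_single N]
  · rw [Set.indicator_of_mem hx, mul_one]
  · intro M hMN
    rw [Set.indicator_of_notMem, mul_zero]
    exact fun hxM => hMN (combI_uniq hxM hx)

lemma combF_eq_zero {x : ℝ} (hx : ∀ N : ℕ, x ∉ combI N) : combF x = 0 := by
  rw [combF_def]
  have : ∀ N : ℕ, Real.exp ((N + 1 : ℝ) / 2) *
      Set.indicator (combI N) (fun _ => (1 : ℝ)) x = 0 := by
    intro N
    rw [Set.indicator_of_notMem (hx N), mul_zero]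
  rw [tsum_congr this, tsum_zero]

lemma combI_subset_Ici (N : ℕ) : combI N ⊆ Set.Ici (0 : ℝ) := by
  intro x hx
  have h1 := hx.1
  have h2 := comb_exp_lt_half N
  have h3 : (0 : ℝ) ≤ N := Nat.cast_nonneg N
  simp only [Set.mem_Ici]
  linarith [hx.1]

lemma combI_pos {N : ℕ} {x : ℝ} (hx : x ∈ combI N) : 0 ≤ x := combI_subset_Ici N hx

lemma combI_le {N : ℕ} {x : ℝ} (hx : x ∈ combI N) : x ≤ (N : ℝ) + 2 := by
  have h1 := hx.2
  have h2 := comb_exp_lt_half N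
  linarith

lemma combI_disjoint : Pairwise (Function.onFun Disjoint combI) := by
  intro N M hNM
  exact Set.disjoint_left.2 fun x hxN hxM => hNM (combI_uniq hxN hxM)

lemma combI_volume (N : ℕ) : (volume (combI N)).toReal = 2 * Real.exp (-(N + 1 : ℝ)) := by
  rw [combI, Real.volume_Icc]
  rw [ENNReal.toReal_ofReal (by nlinarith [Real.exp_pos (-(N + 1 : ℝ))] : (0:ℝ) ≤ ((N + 1 : ℝ) + Real.exp (-(N + 1 : ℝ))) - ((N + 1 : ℝ) - Real.exp (-(N + 1 : ℝ))))]
  ring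

lemma comb_exp_prod (N : ℕ) : Real.exp ((N + 1 : ℝ) / 2) * (2 * Real.exp (-(N + 1 : ℝ)))
    = 2 * Real.exp (-(1 / 2) : ℝ) ^ (N + 1) := by
  rw [← Real.exp_nat_mul]
  rw [show ((N + 1 : ℕ) : ℝ) * (-(1 / 2)) = -(((N : ℝ) + 1) / 2) by push_cast; ring]
  rw [show Real.exp ((N + 1 : ℝ) / 2) * (2 * Real.exp (-(N + 1 : ℝ)))
      = 2 * (Real.exp ((N + 1 : ℝ) / 2) * Real.exp (-(N + 1 : ℝ))) by ring]
  rw [← Real.exp_add]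
  congr 1
  ring

lemma comb_summable (m : ℕ) :
    Summable fun N : ℕ => ((N : ℝ) + 2) ^ m * Real.exp ((N + 1 : ℝ) / 2) *
      (2 * Real.exp (-(N + 1 : ℝ))) := by
  have hq0 : (0 : ℝ) < Real.exp (-(1 / 2) : ℝ) := Real.exp_pos _
  have hq1 : Real.exp (-(1 / 2) : ℝ) < 1 := Real.exp_lt_one_iff.2 (by norm_num)
  have heq : ∀ N : ℕ, ((N : ℝ) + 2) ^ m * Real.exp ((N + 1 : ℝ) / 2) *
      (2 * Real.exp (-(N + 1 : ℝ)))
      = 2 * (((N : ℝ) + 2) ^ m * Real.exp (-(1 / 2) : ℝ) ^ (N + 1)) := by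
    intro N
    rw [mul_assoc, comb_exp_prod]
    ring
  rw [funext heq]
  apply Summable.mul_left
  have hs : Summable fun n : ℕ => (n : ℝ) ^ m * Real.exp (-(1 / 2) : ℝ) ^ n :=
    summable_pow_mul_geometric_of_norm_lt_one m
      (by rw [Real.norm_eq_abs, abs_of_pos hq0]; exact hq1)
  have hs2 : Summable fun n : ℕ => ((n + 2 : ℕ) : ℝ) ^ m * Real.exp (-(1 / 2) : ℝ) ^ (n + 2) :=
    (summable_nat_add_iff 2).2 hs
  apply Summable.congr (hs2.mul_left (Real.exp (-(1 / 2) : ℝ))⁻¹)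
  intro n
  push_cast
  rw [pow_succ _ (n + 1)]
  field_simp

lemma combI_meas (N : ℕ) : MeasurableSet (combI N) := measurableSet_Icc

lemma comb_integrableOn (m : ℕ) (N : ℕ) :
    IntegrableOn (fun x => x ^ m * combF x) (combI N) := by
  have hcont : Continuous fun x : ℝ => x ^ m * Real.exp ((N + 1 : ℝ) / 2) :=
    (continuous_pow m).mul continuous_const
  have : IntegrableOn (fun x : ℝ => x ^ m * Real.exp ((N + 1 : ℝ) / 2)) (combI N) :=
    hcont.integrableOn_Icc
  apply this.congr_fun _ (combI_meas N)
  intro x hx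
  show x ^ m * Real.exp ((N + 1 : ℝ) / 2) = x ^ m * combF x
  rw [combF_eq_of_mem hx]

/-- the comb function is ERD on `[0,∞)` but unbounded, and its square
is not ERD. -/
theorem stmt_6 :
    (∀ m : ℕ, IntegrableOn (fun x => x ^ m * combF x) (Set.Ici (0 : ℝ))) ∧
    (∀ M : ℝ, ∃ x : ℝ, 0 ≤ x ∧ M < combF x) ∧
    ¬ (∀ m : ℕ, IntegrableOn (fun x => x ^ m * (combF x) ^ 2) (Set.Ici (0 : ℝ))) := by
  refine ⟨?_, ?_, ?_⟩
  · -- ERD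
    intro m
    set f : ℝ → ℝ := fun x => x ^ m * combF x with hf
    have hU : IntegrableOn f (⋃ N, combI N) := by
      apply integrableOn_iUnion_of_summable_integral_norm
        (comb_integrableOn m)
      refine Summable.of_nonneg_of_le
        (fun N => setIntegral_nonneg (combI_meas N) fun x _ => norm_nonneg _)
        (fun N => ?_) (comb_summable m)
      have hb : ∀ x ∈ combI N, ‖‖f x‖‖ ≤ ((N : ℝ) + 2) ^ m * Real.exp ((N + 1 : ℝ) / 2) := by
        intro x hx
        rw [norm_norm, hf]
        simp only [norm_mul, Real.norm_eq_abs]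
        rw [combF_eq_of_mem hx, abs_of_nonneg (Real.exp_pos _).le, abs_pow,
          abs_of_nonneg (combI_pos hx)]
        apply mul_le_mul_of_nonneg_right _ (Real.exp_pos _).le
        exact pow_le_pow_left₀ (combI_pos hx) (combI_le hx) m
      have hvol : volume (combI N) < ⊤ := by rw [combI]; exact measure_Icc_lt_top
      calc ∫ x in combI N, ‖f x‖ ≤ ‖∫ x in combI N, ‖f x‖‖ := le_abs_self _
        _ ≤ (((N : ℝ) + 2) ^ m * Real.exp ((N + 1 : ℝ) / 2)) * (volume (combI N)).toReal :=
          norm_setIntegral_le_of_norm_le_const hvol hb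
        _ = _ := by rw [combI_volume]
    have hZ : IntegrableOn f (Set.Ici (0 : ℝ) \ ⋃ N, combI N) := by
      have hz : IntegrableOn (fun _ : ℝ => (0:ℝ)) (Set.Ici (0:ℝ) \ ⋃ N, combI N) volume :=
        integrableOn_zero
      apply hz.congr_fun _
        (measurableSet_Ici.diff (MeasurableSet.iUnion combI_meas))
      intro x hx
      have hxn : ∀ N, x ∉ combI N := by
        intro N hNx
        exact hx.2 (Set.mem_iUnion.2 ⟨N, hNx⟩)
      show (0:ℝ) = x ^ m * combF x
      rw [combF_eq_zero hxn, mul_zero]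
    have := hU.union hZ
    apply this.mono_set
    intro x hx
    by_cases hmem : x ∈ ⋃ N, combI N
    · exact Set.mem_union_left _ hmem
    · exact Set.mem_union_right _ ⟨hx, hmem⟩
  · -- unbounded
    intro M
    set n : ℕ := ⌈2 * M⌉₊ with hn
    refine ⟨(n : ℝ) + 1, by positivity, ?_⟩
    have hmem : ((n : ℝ) + 1) ∈ combI n := by
      simp only [combI, Set.mem_Icc]
      constructor <;> nlinarith [Real.exp_pos (-(n + 1 : ℝ))]
    rw [combF_eq_of_mem hmem]
    have h1 : ((n : ℝ) + 1) / 2 + 1 ≤ Real.exp (((n : ℝ) + 1) / 2) := Real.add_one_le_exp _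
    have h2 : 2 * M ≤ (n : ℝ) := Nat.le_ceil _
    linarith
  · -- square not ERD
    intro h
    have h0 := (h 0).mono_set (Set.iUnion_subset combI_subset_Ici)
    have hS := hasSum_integral_iUnion (μ := volume) (s := combI) combI_meas
      combI_disjoint h0
    have heval : ∀ N : ℕ, (∫ x in combI N, x ^ 0 * (combF x) ^ 2) = 2 := by
      intro N
      have : ∀ x ∈ combI N, x ^ 0 * (combF x) ^ 2 = Real.exp ((N : ℝ) + 1) := by
        intro x hx
        rw [pow_zero, one_mul, combF_eq_of_mem hx, sq, ← Real.exp_add]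
        congr 1
        ring
      rw [setIntegral_congr_fun (combI_meas N) this, setIntegral_const, smul_eq_mul,
        measureReal_def, combI_volume, mul_assoc, ← Real.exp_add]
      rw [show (-(N + 1 : ℝ)) + ((N : ℝ) + 1) = 0 by ring, Real.exp_zero]
      ring
    have htend := hS.summable.tendsto_atTop_zero
    rw [show (fun N : ℕ => ∫ x in combI N, x ^ 0 * (combF x) ^ 2) = fun _ => (2 : ℝ) from
      funext heval] at htend
    have : (2 : ℝ) = 0 := tendsto_nhds_unique tendsto_const_nhds htend
    norm_num at this
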